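/- arXiv:1109.3517 — 2 statements merged into one kernel-verified Lean document; each statement's English description precedes it below -/
import Mathlib

section
/- Let q : ℕ → [0,1] be a probability function with finite m-th moment (∑_k k^m q(k) < ∞), and let p ∈ (0,1). Define q̃(z) for z ≥ 1 as 2p(1-p)^{2z} q(1) + p^{2z+1} q(2z+1) + ∑_{k=2}^{2z} p^k (1-p)^{2z-k+1}[2·C(2z-1,k-1)+C(2z-1,k-2)] q(k). Then ∑_{z=1}^∞ z^m q̃(z) < ∞. -/
-- n^M * C(n,s) ≤ (s+M)^M * C(n+M, s+M)
lemma aux_nat_choose (s M n : ℕ) : n ^ M * n.choose s ≤ (s + M) ^ M * (n + M).choose (s + M) := by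
  induction M with
  | zero => simp
  | succ M ih =>
    have h1 : n ^ (M+1) * n.choose s = n * (n ^ M * n.choose s) := by ring
    have h2 : n * (n ^ M * n.choose s) ≤ n * ((s + M) ^ M * (n + M).choose (s + M)) :=
      Nat.mul_le_mul_left _ ih
    have h3 : n * ((s + M) ^ M * (n + M).choose (s + M)) ≤
        (s + M) ^ M * ((n + M + 1) * (n + M).choose (s + M)) := by
      rw [Nat.mul_left_comm]
      exact Nat.mul_le_mul_left _ (Nat.mul_le_mul_right _ (by omega))
    have h4 : (n + M + 1) * (n + M).choose (s + M) = (n + M + 1).choose (s + M + 1) * (s + M + 1) :=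
      Nat.add_one_mul_choose_eq _ _
    calc n ^ (M+1) * n.choose s ≤ (s + M) ^ M * ((n + M + 1).choose (s + M + 1) * (s + M + 1)) := by
          rw [h1, ← h4]; exact le_trans h2 h3
      _ ≤ (s + M + 1) ^ M * ((n + M + 1).choose (s + M + 1) * (s + M + 1)) :=
          Nat.mul_le_mul_right _ (Nat.pow_le_pow_left (by omega) _)
      _ = (s + (M+1)) ^ (M+1) * (n + (M+1)).choose (s + (M+1)) := by ring_nf

lemma aux_hasSum {y : ℝ} (hy0 : 0 < y) (hy1 : y < 1) (s M : ℕ) :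
    HasSum (fun n : ℕ => ((n + M).choose (s + M) : ℝ) * y ^ n) (y ^ s / (1 - y) ^ (s + M + 1)) := by
  have hnorm : ‖y‖ < 1 := by rw [Real.norm_eq_abs, abs_of_pos hy0]; exact hy1
  have h1 := hasSum_choose_mul_geometric_of_norm_lt_one (𝕜 := ℝ) (s + M) hnorm
  have h2 := h1.mul_left (y ^ s)
  rw [mul_one_div] at h2
  have h3 : HasSum (fun j : ℕ => ((j + s + M).choose (s + M) : ℝ) * y ^ (j + s))
      (y ^ s / (1 - y) ^ (s + M + 1)) := by
    have he : (fun j : ℕ => ((j + s + M).choose (s + M) : ℝ) * y ^ (j + s)) =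
        fun j : ℕ => y ^ s * (((j + (s + M)).choose (s + M) : ℝ) * y ^ j) := by
      funext j
      rw [pow_add, Nat.add_assoc]
      ring
    rw [he]
    exact h2
  have h4 := (hasSum_nat_add_iff (f := fun n : ℕ => ((n + M).choose (s + M) : ℝ) * y ^ n) s).1
    (by convert h3 using 2 with j)
  have : ∑ i ∈ Finset.range s, ((i + M).choose (s + M) : ℝ) * y ^ i = 0 := by
    apply Finset.sum_eq_zero
    intro i hi
    rw [Nat.choose_eq_zero_of_lt (by simp at hi; omega)]
    simp
  rw [this, add_zero] at h4
  exact h4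

lemma aux_summable {y : ℝ} (hy0 : 0 < y) (hy1 : y < 1) (s M : ℕ) :
    Summable (fun n : ℕ => (n : ℝ) ^ M * (n.choose s) * y ^ n) := by
  refine Summable.of_nonneg_of_le (fun n => by positivity) (fun n => ?_)
    (((aux_hasSum hy0 hy1 s M).summable).mul_left (((s + M : ℕ) : ℝ) ^ M))
  · have h := aux_nat_choose s M n
    have h' : ((n : ℝ) ^ M * (n.choose s)) ≤ ((s + M : ℕ) : ℝ) ^ M * ((n + M).choose (s + M)) := by
      exact_mod_cast h
    have hyn : (0:ℝ) ≤ y ^ n := by positivity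
    calc (n : ℝ) ^ M * (n.choose s) * y ^ n ≤ (((s + M : ℕ) : ℝ) ^ M * ((n + M).choose (s + M))) * y ^ n :=
          mul_le_mul_of_nonneg_right h' hyn
      _ = ((s + M : ℕ) : ℝ) ^ M * (((n + M).choose (s + M) : ℝ) * y ^ n) := by ring

lemma aux_tsum_le {y : ℝ} (hy0 : 0 < y) (hy1 : y < 1) (s M : ℕ) :
    ∑' n : ℕ, (n : ℝ) ^ M * (n.choose s) * y ^ n
      ≤ ((s + M : ℕ) : ℝ) ^ M * (y ^ s / (1 - y) ^ (s + M + 1)) := by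
  have hb := (aux_hasSum hy0 hy1 s M).mul_left (((s + M : ℕ) : ℝ) ^ M)
  refine le_trans (Summable.tsum_le_tsum ?_ (aux_summable hy0 hy1 s M) hb.summable) (le_of_eq hb.tsum_eq)
  intro n
  have h' : ((n : ℝ) ^ M * (n.choose s)) ≤ ((s + M : ℕ) : ℝ) ^ M * ((n + M).choose (s + M)) := by
    exact_mod_cast aux_nat_choose s M n
  have hyn : (0:ℝ) ≤ y ^ n := by positivity
  calc (n : ℝ) ^ M * (n.choose s) * y ^ n ≤ (((s + M : ℕ) : ℝ) ^ M * ((n + M).choose (s + M))) * y ^ n :=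
        mul_le_mul_of_nonneg_right h' hyn
    _ = ((s + M : ℕ) : ℝ) ^ M * (((n + M).choose (s + M) : ℝ) * y ^ n) := by ring

lemma middle_summable (m : ℕ) {p : ℝ} (hp0 : 0 < p) (hp1 : p < 1)
    (q : ℕ → ℝ) (hq : ∀ n, 0 ≤ q n)
    (hmom : Summable fun k : ℕ => (k : ℝ) ^ m * q k) :
    Summable fun z : ℕ => (z : ℝ) ^ m *
      ∑ k ∈ Finset.Icc 2 (2 * z),
        p ^ k * (1 - p) ^ (2 * z - k + 1)
          * (2 * Nat.choose (2 * z - 1) (k - 1) + Nat.choose (2 * z - 1) (k - 2)) * q k := by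
  have hy0 : (0:ℝ) < 1 - p := by linarith
  have hy1 : (1:ℝ) - p < 1 := by linarith
  set F : ℕ × ℕ → ℝ := fun zk =>
    if zk.2 ∈ Finset.Icc 2 (2 * zk.1) then
      (zk.1 : ℝ) ^ m * (p ^ zk.2 * (1 - p) ^ (2 * zk.1 - zk.2 + 1)
        * (2 * (Nat.choose (2 * zk.1 - 1) (zk.2 - 1) : ℝ) + (Nat.choose (2 * zk.1 - 1) (zk.2 - 2) : ℝ))
        * q zk.2)
    else 0 with hF
  have hF0 : ∀ zk, 0 ≤ F zk := by
    intro zk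
    simp only [hF]
    split_ifs
    · have h1 : (0:ℝ) ≤ 2 * (Nat.choose (2 * zk.1 - 1) (zk.2 - 1) : ℝ)
          + (Nat.choose (2 * zk.1 - 1) (zk.2 - 2) : ℝ) := by positivity
      have h2 := hq zk.2
      have h3 : (0:ℝ) ≤ p ^ zk.2 * (1 - p) ^ (2 * zk.1 - zk.2 + 1) := by positivity
      exact mul_nonneg (by positivity)
        (mul_nonneg (mul_nonneg h3 h1) h2)
    · exact le_refl 0
  have hinj2 : Function.Injective (fun z : ℕ => 2 * z) := fun a b h => by simp only at h; omega
  -- key pointwise bound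
  have key : ∀ k z : ℕ, F (z, k) ≤
      (2 * p ^ k * q k / (1 - p) ^ (k - 1)) *
        (((2 * z : ℕ) : ℝ) ^ m * (((2 * z).choose (k - 1) : ℕ) : ℝ) * (1 - p) ^ (2 * z)) := by
    intro k z
    simp only [hF]
    split_ifs with hmem
    · simp only [Finset.mem_Icc] at hmem
      obtain ⟨hk2, hk2z⟩ := hmem
      have hexpdiv : (1 - p) ^ (2 * z - k + 1) = (1 - p) ^ (2 * z) / (1 - p) ^ (k - 1) := by
        rw [eq_div_iff (by positivity : (0:ℝ) < (1 - p) ^ (k - 1)).ne', ← pow_add]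
        congr 1
        omega
      have hcoeff : 2 * (2 * z - 1).choose (k - 1) + (2 * z - 1).choose (k - 2)
          ≤ 2 * (2 * z).choose (k - 1) := by
        obtain ⟨a, ha⟩ : ∃ a, 2 * z = a + 1 := ⟨2 * z - 1, by omega⟩
        obtain ⟨b, hb⟩ : ∃ b, k = b + 2 := ⟨k - 2, by omega⟩
        have hid : (2 * z).choose (k - 1) = (2 * z - 1).choose (k - 2) + (2 * z - 1).choose (k - 1) := by
          rw [ha, hb]
          have e1 : a + 1 - 1 = a := by omega
          have e2 : b + 2 - 1 = b + 1 := by omega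
          have e3 : b + 2 - 2 = b := by omega
          rw [e1, e2, e3]
          exact Nat.choose_succ_succ a b
        omega
      have hnat : z ^ m * (2 * (2 * z - 1).choose (k - 1) + (2 * z - 1).choose (k - 2))
          ≤ (2 * z) ^ m * (2 * (2 * z).choose (k - 1)) :=
        Nat.mul_le_mul (Nat.pow_le_pow_left (by omega) m) hcoeff
      have hreal : (z : ℝ) ^ m * (2 * (Nat.choose (2 * z - 1) (k - 1) : ℝ)
            + (Nat.choose (2 * z - 1) (k - 2) : ℝ))
          ≤ ((2 * z : ℕ) : ℝ) ^ m * (2 * (((2 * z).choose (k - 1) : ℕ) : ℝ)) := by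
        exact_mod_cast hnat
      have hfac : (0:ℝ) ≤ p ^ k * q k * (1 - p) ^ (2 * z) / (1 - p) ^ (k - 1) := by
        have := hq k
        positivity
      calc (z : ℝ) ^ m * (p ^ k * (1 - p) ^ (2 * z - k + 1)
            * (2 * (Nat.choose (2 * z - 1) (k - 1) : ℝ) + (Nat.choose (2 * z - 1) (k - 2) : ℝ)) * q k)
          = ((z : ℝ) ^ m * (2 * (Nat.choose (2 * z - 1) (k - 1) : ℝ)
              + (Nat.choose (2 * z - 1) (k - 2) : ℝ)))
            * (p ^ k * q k * (1 - p) ^ (2 * z) / (1 - p) ^ (k - 1)) := by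
            rw [hexpdiv]; ring
        _ ≤ (((2 * z : ℕ) : ℝ) ^ m * (2 * (((2 * z).choose (k - 1) : ℕ) : ℝ)))
            * (p ^ k * q k * (1 - p) ^ (2 * z) / (1 - p) ^ (k - 1)) :=
            mul_le_mul_of_nonneg_right hreal hfac
        _ = (2 * p ^ k * q k / (1 - p) ^ (k - 1)) *
            (((2 * z : ℕ) : ℝ) ^ m * (((2 * z).choose (k - 1) : ℕ) : ℝ) * (1 - p) ^ (2 * z)) := by
            ring
    · have := hq k
      positivity
  -- summability in z for each fixed k
  have hsum_k : ∀ k : ℕ, Summable (fun z => F (z, k)) := by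
    intro k
    refine Summable.of_nonneg_of_le (fun z => hF0 (z, k)) (key k) ?_
    exact ((aux_summable hy0 hy1 (k - 1) m).comp_injective hinj2).mul_left _
  -- tsum bound for k ≥ 2
  have htsum_le : ∀ k : ℕ, 2 ≤ k → ∑' z, F (z, k)
      ≤ 2 / p ^ m * (((k - 1 + m : ℕ)) : ℝ) ^ m * q k := by
    intro k hk
    have hc : (0:ℝ) ≤ 2 * p ^ k * q k / (1 - p) ^ (k - 1) := by
      have := hq k; positivity
    have hsg : Summable (fun z : ℕ => (2 * p ^ k * q k / (1 - p) ^ (k - 1)) *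
        (((2 * z : ℕ) : ℝ) ^ m * (((2 * z).choose (k - 1) : ℕ) : ℝ) * (1 - p) ^ (2 * z))) :=
      ((aux_summable hy0 hy1 (k - 1) m).comp_injective hinj2).mul_left _
    have step1 := Summable.tsum_le_tsum (key k) (hsum_k k) hsg
    have step2 : ∑' z : ℕ, (2 * p ^ k * q k / (1 - p) ^ (k - 1)) *
        (((2 * z : ℕ) : ℝ) ^ m * (((2 * z).choose (k - 1) : ℕ) : ℝ) * (1 - p) ^ (2 * z))
        = (2 * p ^ k * q k / (1 - p) ^ (k - 1)) *
          ∑' z : ℕ, (((2 * z : ℕ) : ℝ) ^ m * (((2 * z).choose (k - 1) : ℕ) : ℝ) * (1 - p) ^ (2 * z)) :=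
      tsum_mul_left
    have step3 : ∑' z : ℕ, (((2 * z : ℕ) : ℝ) ^ m * (((2 * z).choose (k - 1) : ℕ) : ℝ) * (1 - p) ^ (2 * z))
        ≤ ∑' n : ℕ, (n : ℝ) ^ m * (n.choose (k - 1)) * (1 - p) ^ n := by
      refine Summable.tsum_le_tsum_of_inj (fun z : ℕ => 2 * z) hinj2 (fun c _ => by positivity)
        (fun b => le_refl _) ((aux_summable hy0 hy1 (k - 1) m).comp_injective hinj2)
        (aux_summable hy0 hy1 (k - 1) m)
    have step4 := aux_tsum_le hy0 hy1 (k - 1) m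
    have harith : (2 * p ^ k * q k / (1 - p) ^ (k - 1)) *
        ((((k - 1 + m : ℕ)) : ℝ) ^ m * ((1 - p) ^ (k - 1) / (1 - (1 - p)) ^ (k - 1 + m + 1)))
        = 2 / p ^ m * (((k - 1 + m : ℕ)) : ℝ) ^ m * q k := by
      have h1p : (1:ℝ) - (1 - p) = p := by ring
      have hkm : k - 1 + m + 1 = k + m := by omega
      rw [h1p, hkm, pow_add]
      field_simp
    calc ∑' z, F (z, k) ≤ _ := step1
      _ = _ := step2
      _ ≤ (2 * p ^ k * q k / (1 - p) ^ (k - 1)) *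
            ((((k - 1 + m : ℕ)) : ℝ) ^ m * ((1 - p) ^ (k - 1) / (1 - (1 - p)) ^ (k - 1 + m + 1))) := by
          exact mul_le_mul_of_nonneg_left (le_trans step3 step4) hc
      _ = _ := harith
  -- uniform bound
  have hbound : ∀ k : ℕ, ∑' z, F (z, k)
      ≤ (2 / p ^ m * ((m : ℝ) + 1) ^ m) * ((k : ℝ) ^ m * q k) := by
    intro k
    rcases lt_or_ge k 2 with h | h
    · have hz : (fun z : ℕ => F (z, k)) = fun _ => 0 := by
        funext z
        simp only [hF]
        rw [if_neg]
        simp only [Finset.mem_Icc]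
        omega
      rw [hz, tsum_zero]
      have := hq k
      positivity
    · refine le_trans (htsum_le k h) ?_
      have hcast : (((k - 1 + m : ℕ)) : ℝ) = (k : ℝ) - 1 + m := by
        have : ((k - 1 : ℕ) : ℝ) = (k : ℝ) - 1 := by
          rw [Nat.cast_sub (by omega)]; norm_num
        push_cast [this]
        ring
      have hk1 : (1:ℝ) ≤ (k : ℝ) := by exact_mod_cast (by omega : 1 ≤ k)
      have hle : (((k - 1 + m : ℕ)) : ℝ) ≤ ((m : ℝ) + 1) * (k : ℝ) := by
        rw [hcast]
        nlinarith [mul_nonneg (Nat.cast_nonneg m : (0:ℝ) ≤ m) (by linarith : (0:ℝ) ≤ (k:ℝ) - 1)]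
      have hpow : (((k - 1 + m : ℕ)) : ℝ) ^ m ≤ ((m : ℝ) + 1) ^ m * (k : ℝ) ^ m := by
        rw [← mul_pow]
        exact pow_le_pow_left₀ (Nat.cast_nonneg _) hle m
      calc 2 / p ^ m * (((k - 1 + m : ℕ)) : ℝ) ^ m * q k
          = (2 / p ^ m) * ((((k - 1 + m : ℕ)) : ℝ) ^ m * q k) := by ring
        _ ≤ (2 / p ^ m) * ((((m : ℝ) + 1) ^ m * (k : ℝ) ^ m) * q k) :=
            mul_le_mul_of_nonneg_left (mul_le_mul_of_nonneg_right hpow (hq k)) (by positivity)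
        _ = (2 / p ^ m * ((m : ℝ) + 1) ^ m) * ((k : ℝ) ^ m * q k) := by ring
  have hcol : Summable fun k : ℕ => ∑' z, F (z, k) :=
    Summable.of_nonneg_of_le (fun k => tsum_nonneg fun z => hF0 _) hbound (hmom.mul_left _)
  have hG : Summable (fun kz : ℕ × ℕ => F (kz.2, kz.1)) :=
    (summable_prod_of_nonneg (fun kz => hF0 _)).2 ⟨fun k => hsum_k k, hcol⟩
  have hFsum : Summable F := hG.prod_symm
  have hrow : Summable fun z : ℕ => ∑' k, F (z, k) :=
    ((summable_prod_of_nonneg (fun zk => hF0 _)).1 hFsum).2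
  refine hrow.congr ?_
  intro z
  have hts : ∑' k, F (z, k) = ∑ k ∈ Finset.Icc 2 (2 * z), F (z, k) :=
    tsum_eq_sum (fun k hk => by simp only [hF]; rw [if_neg hk])
  rw [hts, Finset.mul_sum]
  apply Finset.sum_congr rfl
  intro k hk
  simp only [hF]
  rw [if_pos hk]


/-- If `q` has finite `m`-th moment, then the law `q̃` of the absolute increment of the
generalized drainage network walk also has finite `m`-th moment. -/
theorem stmt1 (m : ℕ) (p : ℝ) (hp : p ∈ Set.Ioo (0 : ℝ) 1)
    (q : ℕ → ℝ) (hq : ∀ n, 0 ≤ q n) (hqsum : ∑' n, q n = 1)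
    (hmom : Summable fun k : ℕ => (k : ℝ) ^ m * q k)
    (qt : ℕ → ℝ)
    (hqt : ∀ z : ℕ, 1 ≤ z →
      qt z = 2 * p * (1 - p) ^ (2 * z) * q 1 + p ^ (2 * z + 1) * q (2 * z + 1)
        + ∑ k ∈ Finset.Icc 2 (2 * z),
            p ^ k * (1 - p) ^ (2 * z - k + 1)
              * (2 * Nat.choose (2 * z - 1) (k - 1) + Nat.choose (2 * z - 1) (k - 2)) * q k) :
    Summable fun z : ℕ => (z : ℝ) ^ m * qt z := by
  obtain ⟨hp0, hp1⟩ := hp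
  have hA1 : Summable fun z : ℕ => (z : ℝ) ^ m * (2 * p * (1 - p) ^ (2 * z) * q 1) := by
    have hnorm : ‖(1 - p) ^ 2‖ < 1 := by
      rw [Real.norm_eq_abs, abs_of_pos (by nlinarith : (0:ℝ) < (1 - p) ^ 2)]
      nlinarith
    refine ((summable_pow_mul_geometric_of_norm_lt_one m hnorm).mul_left (2 * p * q 1)).congr ?_
    intro z
    rw [← pow_mul]
    ring
  have hA2 : Summable fun z : ℕ => (z : ℝ) ^ m * (p ^ (2 * z + 1) * q (2 * z + 1)) := by
    have hinj : Function.Injective (fun z : ℕ => 2 * z + 1) := fun a b h => by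
      simp only at h; omega
    refine Summable.of_nonneg_of_le (fun z => ?_) (fun z => ?_) (hmom.comp_injective hinj)
    · have := hq (2 * z + 1); positivity
    · show (z : ℝ) ^ m * (p ^ (2 * z + 1) * q (2 * z + 1))
        ≤ ((2 * z + 1 : ℕ) : ℝ) ^ m * q (2 * z + 1)
      have h1 : (z : ℝ) ^ m ≤ ((2 * z + 1 : ℕ) : ℝ) ^ m := by
        apply pow_le_pow_left₀ (Nat.cast_nonneg _)
        exact_mod_cast (by omega : z ≤ 2 * z + 1)
      have h2 : p ^ (2 * z + 1) ≤ 1 := pow_le_one₀ (le_of_lt hp0) (le_of_lt hp1)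
      calc (z : ℝ) ^ m * (p ^ (2 * z + 1) * q (2 * z + 1))
          ≤ (z : ℝ) ^ m * (1 * q (2 * z + 1)) :=
            mul_le_mul_of_nonneg_left (mul_le_mul_of_nonneg_right h2 (hq _)) (by positivity)
        _ ≤ ((2 * z + 1 : ℕ) : ℝ) ^ m * q (2 * z + 1) := by
            rw [one_mul]; exact mul_le_mul_of_nonneg_right h1 (hq _)
  have hA3 := middle_summable m hp0 hp1 q hq hmom
  have hsum3 := (hA1.add hA2).add hA3
  have hshift : Summable fun n : ℕ => ((n + 1 : ℕ) : ℝ) ^ m * qt (n + 1) := by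
    refine ((summable_nat_add_iff 1).2 hsum3).congr ?_
    intro n
    rw [hqt (n + 1) (by omega)]
    ring
  exact (summable_nat_add_iff 1).1 hshift
end

section
/- In the generalized drainage network with p ∈ (0,1) and offspring distribution q, let (U₁(m), V₁(m)) be the increment pair of the difference walk Y conditioned on Y₀ = m. Then 0 < sup_{m≥1} P((U₁(m), V₁(m)) = (0,0)) < 1; i.e., the probability that two walks at distance m move by the same amount in one step is uniformly bounded away from both 0 and 1 over m. -/
open MeasureTheory ProbabilityTheory

/-- The `j`-th site in the ordering of `ℤ` by distance to `x`, where ties at equal distance are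
broken by the coin `θ` (`θ = true`: right site first; `θ = false`: left site first). -/
def siteSeq (θ : Bool) (x : ℤ) (j : ℕ) : ℤ :=
  if j = 0 then x
  else if j % 2 = 1 then (if θ then x + ((j + 1) / 2 : ℕ) else x - ((j + 1) / 2 : ℕ))
  else (if θ then x - (j / 2 : ℕ) else x + (j / 2 : ℕ))

/-- The `k`-th (1-indexed) open site nearest to `x` in the environment `η`, ties broken by the
coin `θ`. -/
noncomputable def kthOpen (η : ℤ → Bool) (θ : Bool) (x : ℤ) (k : ℕ) : ℤ :=
  siteSeq θ x (Nat.nth (fun j => η (siteSeq θ x j) = true) (k - 1))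

lemma siteSeq_zero (θ : Bool) (x : ℤ) : siteSeq θ x 0 = x := rfl

lemma siteSeq_shift (θ : Bool) (x : ℤ) (j : ℕ) : siteSeq θ x j = x + siteSeq θ 0 j := by
  unfold siteSeq; split_ifs <;> simp <;> ring

lemma siteSeq_false (j : ℕ) : siteSeq false 0 j = - siteSeq true 0 j := by
  unfold siteSeq; split_ifs <;> simp_all

lemma siteSeq_ne_zero (j : ℕ) (hj : j ≠ 0) : siteSeq true 0 j ≠ 0 := by
  unfold siteSeq; split_ifs <;> simp <;> omega

lemma siteSeq_one (x : ℤ) : siteSeq true x 1 = x + 1 := by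
  unfold siteSeq; norm_num

lemma nth_all (pred : ℕ → Prop) (n : ℕ) (h : ∀ j ≤ n, pred j) : Nat.nth pred n = n := by
  classical
  have hc : Nat.count pred n = n := by
    rw [Nat.count_eq_card_filter_range, Finset.filter_true_of_mem, Finset.card_range]
    intro j hj; exact h j (le_of_lt (Finset.mem_range.1 hj))
  have := Nat.nth_count (p := pred) (h n le_rfl)
  rwa [hc] at this

lemma nth_one (pred : ℕ → Prop) (h0 : ¬ pred 0) (h1 : pred 1) : Nat.nth pred 0 = 1 := by
  classical
  have hc : Nat.count pred 1 = 0 := by simp [Nat.count_succ, h0]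
  have := Nat.nth_count (p := pred) h1
  rwa [hc] at this

lemma kthOpen_all (η : ℤ → Bool) (θb : Bool) (x : ℤ) (k : ℕ) (hk : 1 ≤ k)
    (h : ∀ j < k, η (siteSeq θb x j) = true) : kthOpen η θb x k = siteSeq θb x (k - 1) := by
  unfold kthOpen
  congr 1
  exact nth_all _ _ (fun j hj => h j (by omega))

lemma kthOpen_skip (η : ℤ → Bool) (x : ℤ) (h0 : η x = false) (h1 : η (x + 1) = true) :
    kthOpen η true x 1 = x + 1 := by
  unfold kthOpen
  have hn : Nat.nth (fun j => η (siteSeq true x j) = true) 0 = 1 := by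
    apply nth_one
    · rw [siteSeq_zero, h0]; simp
    · rw [siteSeq_one, h1]
  norm_num [hn, siteSeq_one]

section Machinery

variable {Ω : Type*} [MeasurableSpace Ω] (μ : Measure Ω) [IsProbabilityMeasure μ]
  (T : ℤ → Ω → Bool × Bool × ℕ)

lemma site_sub (hpttot : ∀ z : ℤ, ∑' s : Bool × Bool × ℕ, μ (T z ⁻¹' {s}) = 1)
    (z : ℤ) (S : Set (Bool × Bool × ℕ)) :
    μ ((T z ⁻¹' S)ᶜ) ≤ 1 - μ (T z ⁻¹' S) := by
  have key : ∀ S' : Set (Bool × Bool × ℕ),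
      μ (T z ⁻¹' S') ≤ ∑' s : S', μ (T z ⁻¹' {(s : Bool × Bool × ℕ)}) := by
    intro S'
    have : T z ⁻¹' S' = ⋃ s : S', T z ⁻¹' {(s : Bool × Bool × ℕ)} := by
      ext ω; simp
    rw [this]
    exact measure_iUnion_le _
  have hadd : μ (T z ⁻¹' S) + μ ((T z ⁻¹' S)ᶜ) ≤ 1 := by
    calc μ (T z ⁻¹' S) + μ ((T z ⁻¹' S)ᶜ)
        ≤ (∑' s : S, μ (T z ⁻¹' {(s : Bool × Bool × ℕ)}))
          + ∑' s : ↥Sᶜ, μ (T z ⁻¹' {(s : Bool × Bool × ℕ)}) := by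
          rw [← Set.preimage_compl]; exact add_le_add (key S) (key Sᶜ)
      _ = ∑' s : Bool × Bool × ℕ, μ (T z ⁻¹' {s}) :=
          Summable.tsum_add_tsum_compl (f := fun s => μ (T z ⁻¹' {s})) (s := S)
            ENNReal.summable ENNReal.summable
      _ = 1 := hpttot z
  exact ENNReal.le_sub_of_add_le_left (measure_ne_top μ _) hadd

lemma compl_inter_le
    (hL1 : ∀ (F : Finset ℤ) (S : ℤ → Set (Bool × Bool × ℕ)),
      μ (⋂ z ∈ F, T z ⁻¹' S z) = ∏ z ∈ F, μ (T z ⁻¹' S z))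
    (hc : ∀ (z : ℤ) (S : Set (Bool × Bool × ℕ)), μ ((T z ⁻¹' S)ᶜ) ≤ 1 - μ (T z ⁻¹' S)) :
    ∀ (F : Finset ℤ) (S : ℤ → Set (Bool × Bool × ℕ)),
      μ ((⋂ z ∈ F, T z ⁻¹' S z)ᶜ) ≤ 1 - μ (⋂ z ∈ F, T z ⁻¹' S z) := by
  classical
  intro F S
  induction F using Finset.induction_on with
  | empty => simp
  | @insert a F ha ih =>
    set X := T a ⁻¹' S a with hX
    set B := ⋂ z ∈ F, T z ⁻¹' S z with hB
    have hins : (⋂ z ∈ insert a F, T z ⁻¹' S z) = X ∩ B := by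
      rw [Finset.set_biInter_insert]
    have hXB : μ (X ∩ B) = μ X * μ B := by
      rw [← hins, hL1 (insert a F) S, Finset.prod_insert ha, ← hX, hL1 F S]
    have hXcB : μ (Xᶜ ∩ B) = μ Xᶜ * μ B := by
      have h2 := hL1 (insert a F) (Function.update S a ((S a)ᶜ))
      rw [Finset.prod_insert ha] at h2
      have e1 : (⋂ z ∈ insert a F, T z ⁻¹' (Function.update S a ((S a)ᶜ)) z) = Xᶜ ∩ B := by
        rw [Finset.set_biInter_insert, Function.update_self]
        congr 1
        exact Set.iInter₂_congr fun z hz => by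
          rw [Function.update_of_ne (ne_of_mem_of_not_mem hz ha)]
      have e2 : ∏ z ∈ F, μ (T z ⁻¹' (Function.update S a ((S a)ᶜ)) z) = μ B := by
        rw [hB, hL1 F S]
        exact Finset.prod_congr rfl fun z hz => by
          rw [Function.update_of_ne (ne_of_mem_of_not_mem hz ha)]
      rw [e1, e2, Function.update_self, Set.preimage_compl, ← hX] at h2
      exact h2
    have hsub : (X ∩ B)ᶜ ⊆ Bᶜ ∪ (Xᶜ ∩ B) := by
      intro ω hω
      by_cases hωB : ω ∈ B
      · right; exact ⟨fun hωX => hω ⟨hωX, hωB⟩, hωB⟩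
      · left; exact hωB
    calc μ ((⋂ z ∈ insert a F, T z ⁻¹' S z)ᶜ) = μ ((X ∩ B)ᶜ) := by rw [hins]
      _ ≤ μ (Bᶜ ∪ (Xᶜ ∩ B)) := measure_mono hsub
      _ ≤ μ Bᶜ + μ (Xᶜ ∩ B) := measure_union_le _ _
      _ ≤ (1 - μ B) + μ Xᶜ * μ B := by rw [hXcB]; exact add_le_add_left ih _
      _ ≤ (1 - μ B) + (1 - μ X) * μ B :=
          add_le_add_right (mul_le_mul_left (hc a (S a)) _) _
      _ = (1 - μ B) + (μ B - μ X * μ B) := by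
          rw [ENNReal.sub_mul (fun _ _ => measure_ne_top μ B), one_mul]
      _ = 1 - μ X * μ B :=
          tsub_add_tsub_cancel prob_le_one (mul_le_of_le_one_left zero_le prob_le_one)
      _ = 1 - μ (X ∩ B) := by rw [hXB]
      _ = 1 - μ (⋂ z ∈ insert a F, T z ⁻¹' S z) := by rw [hins]

end Machinery

/-- In the generalized drainage network, the probability that the two walks at distance `m`
move by the same amount in one step (i.e. `Z^m₁ − Z⁰₁ = m`, i.e. `(U₁(m),V₁(m)) = (0,0)`) is,
as `m` ranges over positive integers, uniformly bounded away from `0` and from `1`. -/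
theorem stmt13 {Ω : Type*} [MeasurableSpace Ω] (μ : Measure Ω) [IsProbabilityMeasure μ]
    (p : ℝ) (hp : p ∈ Set.Ioo (0 : ℝ) 1)
    (q : ℕ → ℝ) (hq : ∀ n, 0 ≤ q n) (hq0 : q 0 = 0) (hqsum : ∑' n, q n = 1)
    (η : Ω → ℤ → Bool) (θ : Ω → ℤ → Bool) (ζ : Ω → ℤ → ℕ)
    (hindep : iIndepFun
      (fun z : ℤ => fun ω => (η ω z, θ ω z, ζ ω z)) μ)
    (hdist : ∀ (z : ℤ) (b c : Bool) (n : ℕ),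
      μ {ω | η ω z = b ∧ θ ω z = c ∧ ζ ω z = n}
        = ENNReal.ofReal (if b then p else 1 - p) * (1 / 2) * ENNReal.ofReal (q n))
    (k : ℕ) (hk : 1 ≤ k) (hqk : 0 < q k) :
    (0 < ⨆ m : ℤ, ⨆ _ : 1 ≤ m,
        (μ {ω | kthOpen (η ω) (θ ω m) m (ζ ω m)
            - kthOpen (η ω) (θ ω 0) 0 (ζ ω 0) = m}).toReal) ∧
    (⨆ m : ℤ, ⨆ _ : 1 ≤ m,
        (μ {ω | kthOpen (η ω) (θ ω m) m (ζ ω m)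
            - kthOpen (η ω) (θ ω 0) 0 (ζ ω 0) = m}).toReal) < 1 := by
  classical
  set T : ℤ → Ω → Bool × Bool × ℕ := fun z ω => (η ω z, θ ω z, ζ ω z) with hT
  set target : ℤ → Set Ω := fun m => {ω | kthOpen (η ω) (θ ω m) m (ζ ω m)
      - kthOpen (η ω) (θ ω 0) 0 (ζ ω 0) = m} with htarget
  -- basic machinery
  have hL1 : ∀ (F : Finset ℤ) (S : ℤ → Set (Bool × Bool × ℕ)),
      μ (⋂ z ∈ F, T z ⁻¹' S z) = ∏ z ∈ F, μ (T z ⁻¹' S z) := fun F S =>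
    hindep.measure_inter_preimage_eq_mul F (fun i _ => (Set.to_countable _).measurableSet)
  have hpt : ∀ (z : ℤ) (b c : Bool) (n : ℕ), μ (T z ⁻¹' {(b, c, n)})
      = ENNReal.ofReal (if b then p else 1 - p) * (1 / 2) * ENNReal.ofReal (q n) := by
    intro z b c n
    rw [← hdist z b c n]
    congr 1
    ext ω
    simp [hT, Prod.ext_iff]
  have hsummable : Summable q := by
    by_contra h
    rw [tsum_eq_zero_of_not_summable h] at hqsum
    norm_num at hqsum
  have hqtsum : ∑' n, ENNReal.ofReal (q n) = 1 := by
    rw [← ENNReal.ofReal_tsum_of_nonneg hq hsummable, hqsum, ENNReal.ofReal_one]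
  have hpttot : ∀ z : ℤ, ∑' s : Bool × Bool × ℕ, μ (T z ⁻¹' {s}) = 1 := by
    intro z
    rw [ENNReal.tsum_prod']
    have inner : ∀ b : Bool, ∑' (cn : Bool × ℕ), μ (T z ⁻¹' {(b, cn)})
        = ENNReal.ofReal (if b then p else 1 - p) := by
      intro b
      rw [ENNReal.tsum_prod']
      have : ∀ c : Bool, ∑' n : ℕ, μ (T z ⁻¹' {(b, c, n)})
          = ENNReal.ofReal (if b then p else 1 - p) * (1 / 2) := by
        intro c
        simp_rw [hpt z b c]
        rw [ENNReal.tsum_mul_left, hqtsum, mul_one]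
      rw [tsum_bool, this, this, ← mul_add]
      norm_num [ENNReal.inv_two_add_inv_two]
    calc ∑' (b : Bool) (cn : Bool × ℕ), μ (T z ⁻¹' {(b, cn)})
        = ∑' b : Bool, ENNReal.ofReal (if b then p else 1 - p) := tsum_congr inner
      _ = 1 := by
          rw [tsum_bool]
          norm_num
          rw [← ENNReal.ofReal_add (by linarith [hp.2]) (le_of_lt hp.1)]
          norm_num
  have hc := site_sub μ T hpttot
  have hL3 := compl_inter_le μ T hL1 hc
  -- elementary probability values
  have hqk1 : q k ≤ 1 := by
    have := Summable.le_tsum hsummable k (fun j _ => hq j)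
    linarith [hqsum ▸ this]
  set w : ENNReal := ENNReal.ofReal (min p (1 - p)) * (1 / 2) * ENNReal.ofReal (q k) with hw
  have hw0 : w ≠ 0 := by
    have h1 : (0:ℝ) < min p (1 - p) := lt_min hp.1 (by linarith [hp.2])
    simp [hw, ENNReal.ofReal_pos.2 h1, ENNReal.ofReal_pos.2 hqk, ne_of_gt, hp.1, hp.2]
  have hw1 : w ≤ 1 := by
    rw [hw]
    have h1 : ENNReal.ofReal (min p (1 - p)) ≤ 1 := by
      rw [show (1:ENNReal) = ENNReal.ofReal 1 by simp]
      exact ENNReal.ofReal_le_ofReal (le_trans (min_le_left _ _) (le_of_lt hp.2))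
    have h2 : ENNReal.ofReal (q k) ≤ 1 := by
      rw [show (1:ENNReal) = ENNReal.ofReal 1 by simp]
      exact ENNReal.ofReal_le_ofReal hqk1
    calc ENNReal.ofReal (min p (1 - p)) * (1 / 2) * ENNReal.ofReal (q k)
        ≤ 1 * 1 * 1 := by
          exact mul_le_mul' (mul_le_mul' h1 (by norm_num)) h2
      _ = 1 := by norm_num
  -- per-site lower bounds via points
  have hptlb : ∀ (z : ℤ) (b c : Bool) (S : Set (Bool × Bool × ℕ)),
      (b, c, k) ∈ S → w ≤ μ (T z ⁻¹' S) := by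
    intro z b c S hmem
    have : μ (T z ⁻¹' {(b, c, k)}) ≤ μ (T z ⁻¹' S) :=
      measure_mono (Set.preimage_mono (Set.singleton_subset_iff.2 hmem))
    refine le_trans ?_ this
    rw [hpt z b c k, hw]
    refine mul_le_mul' (mul_le_mul' (ENNReal.ofReal_le_ofReal ?_) le_rfl) le_rfl
    cases b
    · simpa using min_le_right p (1 - p)
    · simpa using min_le_left p (1 - p)
  -- general event bound machinery
  have hEventLow : ∀ (F : Finset ℤ) (S : ℤ → Set (Bool × Bool × ℕ)),
      (∀ z ∈ F, ∃ b c : Bool, (b, c, k) ∈ S z) →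
      w ^ F.card ≤ μ (⋂ z ∈ F, T z ⁻¹' S z) := by
    intro F S hS
    rw [hL1 F S, ← Finset.prod_const]
    refine Finset.prod_le_prod' fun z hz => ?_
    obtain ⟨b, c, hb⟩ := hS z hz
    exact hptlb z b c (S z) hb
  -- ### Lower bound part: m = 1
  have hlow : 0 < (μ (target 1)).toReal := by
    set F : Finset ℤ := ((Finset.range k).image (siteSeq true 0))
        ∪ ((Finset.range k).image (siteSeq true 1)) with hF
    set S : ℤ → Set (Bool × Bool × ℕ) := fun z =>
      {s | s.1 = true ∧ ((z = 0 ∨ z = 1) → (s.2.1 = true ∧ s.2.2 = k))} with hS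
    have hsub : (⋂ z ∈ F, T z ⁻¹' S z) ⊆ target 1 := by
      intro ω hω
      have hmem : ∀ z ∈ F, T z ω ∈ S z := Set.mem_iInter₂.1 hω
      have h0 : (0:ℤ) ∈ F := Finset.mem_union_left _
        (Finset.mem_image.2 ⟨0, Finset.mem_range.2 hk, siteSeq_zero true 0⟩)
      have h1 : (1:ℤ) ∈ F := Finset.mem_union_right _
        (Finset.mem_image.2 ⟨0, Finset.mem_range.2 hk, siteSeq_zero true 1⟩)
      have hθ0 : θ ω 0 = true := ((hmem 0 h0).2 (Or.inl rfl)).1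
      have hζ0 : ζ ω 0 = k := ((hmem 0 h0).2 (Or.inl rfl)).2
      have hθ1 : θ ω 1 = true := ((hmem 1 h1).2 (Or.inr rfl)).1
      have hζ1 : ζ ω 1 = k := ((hmem 1 h1).2 (Or.inr rfl)).2
      have hη0 : ∀ j < k, η ω (siteSeq true 0 j) = true := fun j hj =>
        (hmem _ (Finset.mem_union_left _
          (Finset.mem_image.2 ⟨j, Finset.mem_range.2 hj, rfl⟩))).1
      have hη1 : ∀ j < k, η ω (siteSeq true 1 j) = true := fun j hj =>
        (hmem _ (Finset.mem_union_right _
          (Finset.mem_image.2 ⟨j, Finset.mem_range.2 hj, rfl⟩))).1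
      show kthOpen (η ω) (θ ω 1) 1 (ζ ω 1) - kthOpen (η ω) (θ ω 0) 0 (ζ ω 0) = 1
      rw [hθ0, hζ0, hθ1, hζ1, kthOpen_all (η ω) true 0 k hk hη0,
        kthOpen_all (η ω) true 1 k hk hη1, siteSeq_shift true 1]
      ring
    have hSgood : ∀ z ∈ F, ∃ b c : Bool, (b, c, k) ∈ S z := fun z _ =>
      ⟨true, true, by simp [hS]⟩
    have hposE : 0 < μ (⋂ z ∈ F, T z ⁻¹' S z) :=
      lt_of_lt_of_le (pos_iff_ne_zero.2 (pow_ne_zero _ hw0)) (hEventLow F S hSgood)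
    exact ENNReal.toReal_pos (ne_of_gt (lt_of_lt_of_le hposE (measure_mono hsub)))
      (measure_ne_top μ _)
  -- ### Upper bound part
  have hupp : ∀ m : ℤ, 1 ≤ m → μ (target m) ≤ 1 - w ^ (2 * k + 2) := by
    intro m hm
    have hm0 : m ≠ 0 := by omega
    -- construct per-case a finset F, S with the three properties
    obtain ⟨F, S, hcard, hSgood, hdisj⟩ :
        ∃ (F : Finset ℤ) (S : ℤ → Set (Bool × Bool × ℕ)),
          F.card ≤ 2 * k + 2 ∧ (∀ z ∈ F, ∃ b c : Bool, (b, c, k) ∈ S z) ∧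
          (⋂ z ∈ F, T z ⁻¹' S z) ∩ target m = ∅ := by
      rcases eq_or_lt_of_le hk with hk1 | hk2
      · -- k = 1 case
        refine ⟨{0, m, m + 1}, fun z =>
          {s | (z = 0 → s.1 = true ∧ s.2.2 = k) ∧ (z = m → s.1 = false ∧ s.2.1 = true ∧ s.2.2 = k)
            ∧ (z = m + 1 → s.1 = true)}, ?_, ?_, ?_⟩
        · have h1 := Finset.card_insert_le (0:ℤ) ({m, m + 1} : Finset ℤ)
          have h2 := Finset.card_insert_le m ({m + 1} : Finset ℤ)
          have h3 : ({m + 1} : Finset ℤ).card = 1 := Finset.card_singleton _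
          have h4 : ({0, m, m + 1} : Finset ℤ) = insert 0 ({m, m + 1} : Finset ℤ) := rfl
          rw [h4]
          omega
        · intro z hz
          refine ⟨if z = m then false else true, true, ?_⟩
          simp only [Set.mem_setOf_eq]
          refine ⟨fun h0 => ?_, fun hm' => ?_, fun hm1 => ?_⟩
          · have hne : ¬ z = m := by omega
            simp [hne]
          · simp [hm']
          · have hne : ¬ z = m := by omega
            simp [hne]
        · ext ω
          simp only [Set.mem_inter_iff, Set.mem_empty_iff_false, iff_false, not_and]
          intro hω
          have hmem : ∀ z ∈ ({0, m, m + 1} : Finset ℤ), T z ω ∈ {s : Bool × Bool × ℕ |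
              (z = 0 → s.1 = true ∧ s.2.2 = k) ∧ (z = m → s.1 = false ∧ s.2.1 = true ∧ s.2.2 = k)
              ∧ (z = m + 1 → s.1 = true)} := Set.mem_iInter₂.1 hω
          have h0 := hmem 0 (by simp)
          have hM := hmem m (by simp)
          have hM1 := hmem (m + 1) (by simp)
          have hη0 : η ω 0 = true := (h0.1 rfl).1
          have hζ0 : ζ ω 0 = k := (h0.1 rfl).2
          have hηm : η ω m = false := (hM.2.1 rfl).1
          have hθm : θ ω m = true := (hM.2.1 rfl).2.1
          have hζm : ζ ω m = k := (hM.2.1 rfl).2.2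
          have hηm1 : η ω (m + 1) = true := hM1.2.2 rfl
          intro htgt
          have htgt' : kthOpen (η ω) (θ ω m) m (ζ ω m)
              - kthOpen (η ω) (θ ω 0) 0 (ζ ω 0) = m := htgt
          rw [hθm, hζm, hζ0, ← hk1] at htgt'
          rw [kthOpen_skip (η ω) m hηm hηm1] at htgt'
          have hk0 : kthOpen (η ω) (θ ω 0) 0 1 = 0 := by
            rw [show (1:ℕ) = k from hk1, kthOpen_all (η ω) (θ ω 0) 0 k hk ?_, ← hk1]
            · rfl
            · intro j hj
              have : j = 0 := by omega
              rw [this, siteSeq_zero, hη0]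
          rw [hk0] at htgt'
          omega
      · -- k ≥ 2 case
        refine ⟨((Finset.range k).image (siteSeq false 0))
            ∪ ((Finset.range k).image (siteSeq true m)), fun z =>
          {s | s.1 = true ∧ (z = 0 → s.2.1 = false ∧ s.2.2 = k)
            ∧ (z = m → s.2.1 = true ∧ s.2.2 = k)}, ?_, ?_, ?_⟩
        · calc _ ≤ ((Finset.range k).image (siteSeq false 0)).card
                + ((Finset.range k).image (siteSeq true m)).card := Finset.card_union_le _ _
            _ ≤ k + k := add_le_add (le_trans (Finset.card_image_le) (by simp))
                (le_trans (Finset.card_image_le) (by simp))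
            _ ≤ 2 * k + 2 := by omega
        · intro z hz
          by_cases hz0 : z = 0
          · exact ⟨true, false, by simp [hz0, hm0.symm]⟩
          · exact ⟨true, true, by simp [hz0]⟩
        · ext ω
          simp only [Set.mem_inter_iff, Set.mem_empty_iff_false, iff_false, not_and]
          intro hω
          have hmem : ∀ z ∈ (((Finset.range k).image (siteSeq false 0))
              ∪ ((Finset.range k).image (siteSeq true m))), T z ω ∈ {s : Bool × Bool × ℕ |
              s.1 = true ∧ (z = 0 → s.2.1 = false ∧ s.2.2 = k)
              ∧ (z = m → s.2.1 = true ∧ s.2.2 = k)} := Set.mem_iInter₂.1 hω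
          have h0mem : (0:ℤ) ∈ ((Finset.range k).image (siteSeq false 0))
              ∪ ((Finset.range k).image (siteSeq true m)) := Finset.mem_union_left _
            (Finset.mem_image.2 ⟨0, Finset.mem_range.2 hk, siteSeq_zero false 0⟩)
          have hMmem : m ∈ ((Finset.range k).image (siteSeq false 0))
              ∪ ((Finset.range k).image (siteSeq true m)) := Finset.mem_union_right _
            (Finset.mem_image.2 ⟨0, Finset.mem_range.2 hk, siteSeq_zero true m⟩)
          have h0 := hmem 0 h0mem
          have hM := hmem m hMmem
          have hθ0 : θ ω 0 = false := (h0.2.1 rfl).1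
          have hζ0 : ζ ω 0 = k := (h0.2.1 rfl).2
          have hθm : θ ω m = true := (hM.2.2 rfl).1
          have hζm : ζ ω m = k := (hM.2.2 rfl).2
          have hη0 : ∀ j < k, η ω (siteSeq false 0 j) = true := fun j hj =>
            (hmem _ (Finset.mem_union_left _
              (Finset.mem_image.2 ⟨j, Finset.mem_range.2 hj, rfl⟩))).1
          have hηm : ∀ j < k, η ω (siteSeq true m j) = true := fun j hj =>
            (hmem _ (Finset.mem_union_right _
              (Finset.mem_image.2 ⟨j, Finset.mem_range.2 hj, rfl⟩))).1
          intro htgt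
          have htgt' : kthOpen (η ω) (θ ω m) m (ζ ω m)
              - kthOpen (η ω) (θ ω 0) 0 (ζ ω 0) = m := htgt
          rw [hθm, hζm, hθ0, hζ0, kthOpen_all (η ω) false 0 k hk hη0,
            kthOpen_all (η ω) true m k hk hηm, siteSeq_shift true m,
            siteSeq_false] at htgt'
          have : siteSeq true 0 (k - 1) ≠ 0 := siteSeq_ne_zero (k - 1) (by omega)
          omega
    -- assemble
    have hEl := hEventLow F S hSgood
    have hμE : w ^ (2 * k + 2) ≤ μ (⋂ z ∈ F, T z ⁻¹' S z) := by
      refine le_trans ?_ hEl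
      exact pow_le_pow_right_of_le_one' hw1 hcard
    have htsub : target m ⊆ (⋂ z ∈ F, T z ⁻¹' S z)ᶜ := by
      rw [Set.subset_compl_iff_disjoint_left, Set.disjoint_iff_inter_eq_empty]
      exact hdisj
    calc μ (target m) ≤ μ ((⋂ z ∈ F, T z ⁻¹' S z)ᶜ) := measure_mono htsub
      _ ≤ 1 - μ (⋂ z ∈ F, T z ⁻¹' S z) := hL3 F S
      _ ≤ 1 - w ^ (2 * k + 2) := tsub_le_tsub_left hμE 1
  -- ### assemble the suprema
  set g : ℤ → ℝ := fun m => ⨆ _ : 1 ≤ m, (μ (target m)).toReal with hg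
  have hr1 : (1 : ENNReal) - w ^ (2 * k + 2) < 1 :=
    ENNReal.sub_lt_self ENNReal.one_ne_top one_ne_zero (pow_ne_zero _ hw0)
  set r : ℝ := ((1 : ENNReal) - w ^ (2 * k + 2)).toReal with hr
  have hrlt : r < 1 := by
    have := ENNReal.toReal_lt_toReal (ne_top_of_le_ne_top ENNReal.one_ne_top
      (le_of_lt hr1)) ENNReal.one_ne_top |>.2 hr1
    simpa using this
  have hr0 : 0 ≤ r := ENNReal.toReal_nonneg
  have hgle : ∀ m, g m ≤ r := by
    intro m
    apply Real.iSup_le _ hr0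
    intro hm
    have := hupp m hm
    exact ENNReal.toReal_mono (ne_top_of_le_ne_top ENNReal.one_ne_top tsub_le_self) this
  constructor
  · have hbdd : BddAbove (Set.range g) := ⟨r, by rintro _ ⟨m, rfl⟩; exact hgle m⟩
    have h1 : g 1 = (μ (target 1)).toReal := by
      rw [hg]
      have : Nonempty ((1:ℤ) ≤ 1) := ⟨le_refl 1⟩
      exact ciSup_const
    calc (0:ℝ) < (μ (target 1)).toReal := hlow
      _ = g 1 := h1.symm
      _ ≤ ⨆ m : ℤ, g m := le_ciSup hbdd 1
  · calc (⨆ m : ℤ, g m) ≤ r := Real.iSup_le hgle hr0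
      _ < 1 := hrlt
end
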